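/- Fix R > 1 and real numbers s₁, s₂ and D ≥ 0 (representing d_Σ(θ₁,θ₂)). Define F(Θ) = √(|s₁-s₂|² + R²Θ²) + D - Θ for Θ ∈ [0, D]. If D ≤ |s₁-s₂| / (R√(R²-1)), then min_{Θ ∈ [0,D]} F(Θ) = √(|s₁-s₂|² + R²D²). Otherwise, min_{Θ ∈ [0,D]} F(Θ) = |s₁-s₂| · √(R²-1)/R + D, achieved at Θ₀ = |s₁-s₂| / (R√(R²-1)). -/

import Mathlib

open Set

private lemma aux_sq_le (x t : ℝ) (ht : 0 ≤ t) (h : x ^ 2 ≤ t ^ 2) : x ≤ t := by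
  nlinarith

set_option maxHeartbeats 1600000 in
/-- location of the minimum of
`F(Θ) = √(|s₁-s₂|² + R²Θ²) + D - Θ` on `[0, D]`, the function defining the
minimized `R`-stretched Euclidean taxi metric. -/
theorem RET_minimum (R s₁ s₂ D : ℝ) (hR : 1 < R) (hD : 0 ≤ D) :
    (D ≤ |s₁ - s₂| / (R * Real.sqrt (R ^ 2 - 1)) →
      IsLeast ((fun Θ => Real.sqrt (|s₁ - s₂| ^ 2 + R ^ 2 * Θ ^ 2) + D - Θ) '' Set.Icc 0 D)
        (Real.sqrt (|s₁ - s₂| ^ 2 + R ^ 2 * D ^ 2))) ∧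
    (|s₁ - s₂| / (R * Real.sqrt (R ^ 2 - 1)) < D →
      IsLeast ((fun Θ => Real.sqrt (|s₁ - s₂| ^ 2 + R ^ 2 * Θ ^ 2) + D - Θ) '' Set.Icc 0 D)
        (|s₁ - s₂| * Real.sqrt (R ^ 2 - 1) / R + D) ∧
      Real.sqrt (|s₁ - s₂| ^ 2 + R ^ 2 * (|s₁ - s₂| / (R * Real.sqrt (R ^ 2 - 1))) ^ 2) + D -
          |s₁ - s₂| / (R * Real.sqrt (R ^ 2 - 1)) =
        |s₁ - s₂| * Real.sqrt (R ^ 2 - 1) / R + D) := by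
  set a := |s₁ - s₂| with ha_def
  have ha : 0 ≤ a := abs_nonneg _
  have hRpos : 0 < R := lt_trans one_pos hR
  set c := Real.sqrt (R ^ 2 - 1) with hc_def
  have hc2 : c ^ 2 = R ^ 2 - 1 := Real.sq_sqrt (by nlinarith)
  have hcpos : 0 < c := Real.sqrt_pos.mpr (by nlinarith)
  have hRc : 0 < R * c := mul_pos hRpos hcpos
  clear_value a c
  -- the value at Θ₀
  have hval : Real.sqrt (a ^ 2 + R ^ 2 * (a / (R * c)) ^ 2) + D - a / (R * c)
      = a * c / R + D := by
    have h1 : a ^ 2 + R ^ 2 * (a / (R * c)) ^ 2 = (a * R / c) ^ 2 := by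
      field_simp
      linear_combination (a ^ 2) * hc2
    rw [h1, Real.sqrt_sq (by positivity)]
    field_simp
    linear_combination (-a) * hc2
  -- pointwise lower bound for case 2, valid for all Θ ≥ 0
  have key2 : ∀ Θ : ℝ, 0 ≤ Θ → Θ + a * c / R ≤ Real.sqrt (a ^ 2 + R ^ 2 * Θ ^ 2) := by
    intro Θ hΘ
    rw [show Θ + a * c / R = Real.sqrt ((Θ + a * c / R) ^ 2) from
      (Real.sqrt_sq (by positivity)).symm]
    apply Real.sqrt_le_sqrt
    have hkey : (Θ * R + a * c) ^ 2 ≤ (a ^ 2 + R ^ 2 * Θ ^ 2) * R ^ 2 := by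
      nlinarith [sq_nonneg (a - R * c * Θ), hc2, sq_nonneg a, sq_nonneg (Θ * R)]
    have hEq : (Θ + a * c / R) ^ 2 = (Θ * R + a * c) ^ 2 / R ^ 2 := by
      field_simp
    rw [hEq, div_le_iff₀ (by positivity : (0:ℝ) < R ^ 2)]
    linarith
  refine ⟨?_, ?_⟩
  · intro h
    have haD : R * c * D ≤ a := by
      have h2 := (le_div_iff₀ hRc).mp h
      linarith [h2]
    constructor
    · exact ⟨D, ⟨hD, le_refl D⟩, by simp⟩
    · rintro y ⟨Θ, ⟨hΘ0, hΘD⟩, rfl⟩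
      simp only
      have hs : 0 ≤ a ^ 2 + R ^ 2 * Θ ^ 2 := by positivity
      set s := Real.sqrt (a ^ 2 + R ^ 2 * Θ ^ 2) with hs_def
      have hs2 : s ^ 2 = a ^ 2 + R ^ 2 * Θ ^ 2 := Real.sq_sqrt hs
      have hsn : 0 ≤ s := Real.sqrt_nonneg _
      clear_value s
      have hX : 0 ≤ s + D - Θ := by
        have hΘs : Θ ≤ s := by
          have h1 : Θ ^ 2 ≤ a ^ 2 + R ^ 2 * Θ ^ 2 := by
            nlinarith [sq_nonneg a,
              mul_nonneg (sq_nonneg Θ) (show (0:ℝ) ≤ R ^ 2 - 1 by nlinarith)]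
          calc Θ = Real.sqrt (Θ ^ 2) := (Real.sqrt_sq hΘ0).symm
            _ ≤ Real.sqrt (a ^ 2 + R ^ 2 * Θ ^ 2) := Real.sqrt_le_sqrt h1
            _ = s := hs_def.symm
        linarith
      have ha2 : R ^ 2 * (R ^ 2 - 1) * D ^ 2 ≤ a ^ 2 := by
        nlinarith [mul_le_mul haD haD (by positivity : (0:ℝ) ≤ R * c * D) ha, hc2,
          sq_nonneg (R * D)]
      have hpoly : (R ^ 2 * (D + Θ) - (D - Θ)) ^ 2
          + (R ^ 2 - 1) * (D - Θ) * ((3 * R ^ 2 + 1) * D + (R ^ 2 - 1) * Θ)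
          = 4 * (R ^ 2 * (R ^ 2 - 1) * D ^ 2) + 4 * (R ^ 2 * Θ ^ 2) := by ring
      have hprod : 0 ≤ (R ^ 2 - 1) * (D - Θ) * ((3 * R ^ 2 + 1) * D + (R ^ 2 - 1) * Θ) := by
        apply mul_nonneg (mul_nonneg (by nlinarith) (by linarith))
        nlinarith
      have hsq : (R ^ 2 * (D + Θ) - (D - Θ)) ^ 2 ≤ (2 * s) ^ 2 := by linarith [hpoly, hprod, ha2, hs2]
      have h2s : R ^ 2 * (D + Θ) - (D - Θ) ≤ 2 * s := aux_sq_le _ _ (by linarith) (by linarith [hsq])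
      have hmul : 0 ≤ (D - Θ) * (2 * s - (R ^ 2 * (D + Θ) - (D - Θ))) :=
        mul_nonneg (by linarith) (by linarith)
      have hfin : a ^ 2 + R ^ 2 * D ^ 2 ≤ (s + D - Θ) ^ 2 := by nlinarith [hmul, hs2]
      calc Real.sqrt (a ^ 2 + R ^ 2 * D ^ 2) ≤ Real.sqrt ((s + D - Θ) ^ 2) :=
            Real.sqrt_le_sqrt hfin
        _ = s + D - Θ := Real.sqrt_sq hX
  · intro h
    refine ⟨⟨⟨a / (R * c), ⟨by positivity, le_of_lt h⟩, by
        simp only; linarith [hval]⟩, ?_⟩, hval⟩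
    rintro y ⟨Θ, ⟨hΘ0, hΘD⟩, rfl⟩
    simp only
    have := key2 Θ hΘ0
    linarith
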